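/- Let D be a graphic 3-uniform hypergraph degree sequence on n vertices of the form (d_max, d_max, …, d_max, d, d_min, d_min, …, d_min) with d_min ≤ d ≤ d_max. Let D' be a 3-uniform hypergraph degree sequence on n vertices such that every entry of D' lies between d_min and d_max and the sum of the entries of D' equals the sum of the entries of D. Then D' is also a graphic 3-uniform hypergraph degree sequence. -/

import Mathlib

/-- A degree sequence `D` on `n` vertices is graphic as a 3-uniform hypergraph degree sequence:
there exists a set `E` of 3-element subsets of the vertex set (no repeated hyperedges) such that
the degree of each vertex `v` (the number of hyperedges containing `v`) is exactly `D v`. -/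
def HypergraphGraphic {n : ℕ} (D : Fin n → ℕ) : Prop :=
  ∃ E : Finset (Finset (Fin n)),
    (∀ e ∈ E, e.card = 3) ∧
    (∀ v, (E.filter fun e => v ∈ e).card = D v)

/-- Permutation invariance. -/
lemma graphic_comp_perm {n : ℕ} {C : Fin n → ℕ} (h : HypergraphGraphic C)
    (σ : Equiv.Perm (Fin n)) : HypergraphGraphic (C ∘ σ) := by
  obtain ⟨E, h3, hdeg⟩ := h
  refine ⟨E.image (fun e => e.image σ.symm), ?_, ?_⟩
  · intro e he
    simp only [Finset.mem_image] at he
    obtain ⟨e', he', rfl⟩ := he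
    rw [Finset.card_image_of_injective _ σ.symm.injective]
    exact h3 e' he'
  · intro v
    rw [Finset.filter_image, Finset.card_image_of_injOn]
    · rw [show (C ∘ ⇑σ) v = C (σ v) from rfl, ← hdeg (σ v)]
      congr 1
      apply Finset.filter_congr
      intro e _
      simp [Finset.mem_image, Equiv.symm_apply_eq]
    · intro e1 h1 e2 h2 he
      exact Finset.image_injective σ.symm.injective he

lemma transfer {n : ℕ} {C : Fin n → ℕ} {u v : Fin n} (huv : u ≠ v)
    (h2 : C v + 2 ≤ C u) (hg : HypergraphGraphic C) :
    HypergraphGraphic (fun i => if i = u then C u - 1 else if i = v then C v + 1 else C i) := by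
  obtain ⟨E, h3, hdeg⟩ := hg
  -- counting
  have hsplit : ∀ (x y : Fin n),
      (E.filter fun e => x ∈ e ∧ y ∈ e).card + (E.filter fun e => x ∈ e ∧ y ∉ e).card = C x := by
    intro x y
    rw [← hdeg x, ← Finset.filter_filter, ← Finset.filter_filter]
    exact Finset.card_filter_add_card_filter_not (p := fun e => y ∈ e)
  set S := E.filter (fun e => u ∈ e ∧ v ∉ e) with hS
  set T := E.filter (fun e => u ∈ e ∧ v ∈ e) with hT
  set T' := E.filter (fun e => v ∈ e ∧ u ∉ e) with hT'
  have hcomm : E.filter (fun e => v ∈ e ∧ u ∈ e) = T := by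
    rw [hT]; apply Finset.filter_congr; intro e _; constructor <;> (intro h; exact ⟨h.2, h.1⟩)
  have hcu : T.card + S.card = C u := hsplit u v
  have hcv : T.card + T'.card = C v := by rw [← hcomm]; exact hsplit v u
  have hST : T'.card < S.card := by omega
  -- the swap map
  set f : Finset (Fin n) → Finset (Fin n) := fun e => insert v (e.erase u) with hf
  have hexists : ∃ e ∈ S, f e ∉ E := by
    by_contra hcon
    push_neg at hcon
    have hle : S.card ≤ T'.card := by
      apply Finset.card_le_card_of_injOn f
      · intro e he
        have heE := Finset.mem_filter.mp he
        rw [hT', Finset.mem_coe, Finset.mem_filter]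
        refine ⟨hcon e he, by simp [hf], ?_⟩
        simp [hf, huv]
      · intro e1 h1 e2 h2 heq
        have p1 := Finset.mem_filter.mp (Finset.mem_coe.mp h1)
        have p2 := Finset.mem_filter.mp (Finset.mem_coe.mp h2)
        have : ∀ e : Finset (Fin n), u ∈ e → v ∉ e →
            insert u ((f e).erase v) = e := by
          intro e hu hv
          rw [hf]
          simp only
          rw [Finset.erase_insert]
          · rw [Finset.insert_erase hu]
          · simp [hv]
        rw [← this e1 p1.2.1 p1.2.2, ← this e2 p2.2.1 p2.2.2, heq]
    omega
  obtain ⟨e, heS, hfe⟩ := hexists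
  have heE : e ∈ E := (Finset.mem_filter.mp heS).1
  have hue : u ∈ e := (Finset.mem_filter.mp heS).2.1
  have hve : v ∉ e := (Finset.mem_filter.mp heS).2.2
  have hmemf : ∀ w, w ∈ f e ↔ w = v ∨ (w ∈ e ∧ w ≠ u) := by
    intro w; simp [hf, Finset.mem_insert, Finset.mem_erase, and_comm]
  refine ⟨insert (f e) (E.erase e), ?_, ?_⟩
  · intro e' he'
    rcases Finset.mem_insert.mp he' with rfl | he'
    · rw [hf]
      simp only
      rw [Finset.card_insert_of_notMem (by simp [hve]),
        Finset.card_erase_of_mem hue, h3 e heE]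
    · exact h3 e' (Finset.mem_of_mem_erase he')
  · intro w
    have hfeE' : f e ∉ E.erase e := fun h => hfe (Finset.mem_of_mem_erase h)
    rw [Finset.filter_insert]
    by_cases hw : w ∈ f e
    · rw [if_pos hw, Finset.card_insert_of_notMem (fun h => hfeE' (Finset.mem_filter.mp h).1),
        Finset.filter_erase]
      rcases (hmemf w).mp hw with h | ⟨hwe, hwu⟩
      · -- w = v
        rw [h]
        rw [Finset.erase_eq_of_notMem (by simp [hve]), hdeg v]
        simp [huv.symm]
      · -- w ∈ e, w ≠ u ; also w ≠ v? w could equal v but v ∉ e, so w ≠ v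
        have hwv : w ≠ v := fun h => hve (h ▸ hwe)
        rw [Finset.card_erase_of_mem (by simp [heE, hwe]), hdeg w]
        have : 1 ≤ C w := by
          rw [← hdeg w]
          exact Finset.card_pos.mpr ⟨e, by simp [heE, hwe]⟩
        simp only [if_neg hwu, if_neg hwv]
        omega
    · rw [if_neg hw, Finset.filter_erase]
      by_cases hwe : w ∈ e
      · -- then w = u (since w ∈ e, w ∉ f e means w = u by hmemf)
        have hwu : w = u := by
          by_contra hne
          exact hw ((hmemf w).mpr (Or.inr ⟨hwe, hne⟩))
        subst hwu
        rw [Finset.card_erase_of_mem (by simp [heE, hwe]), hdeg w]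
        simp
      · have hwv : w ≠ v := fun h => hw ((hmemf w).mpr (Or.inl h))
        have hwu : w ≠ u := fun h => hwe (h ▸ hue)
        rw [Finset.erase_eq_of_notMem (by simp [hwe]), hdeg w]
        simp [hwu, hwv]

/-- Main induction: from a graphic C with the right invariant, reach D'. -/
lemma reach {n : ℕ} (D' : Fin n → ℕ) :
    ∀ μ (C : Fin n → ℕ), (∑ i, ((C i - D' i) + (D' i - C i)) = μ) →
    HypergraphGraphic C → (∑ i, C i = ∑ i, D' i) →
    (∀ u v, D' u < C u → C v < D' v → D' v ≤ D' u) →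
    HypergraphGraphic D' := by
  intro μ
  induction μ using Nat.strong_induction_on with
  | _ μ ih =>
    intro C hμ hg hsum hinv
    by_cases hCD : C = D'
    · exact hCD ▸ hg
    · -- find surplus u and deficit v
      have hu : ∃ u, D' u < C u := by
        by_contra hcon
        push_neg at hcon
        have : C = D' := by
          funext i
          by_contra hne
          have hlt : C i < D' i := lt_of_le_of_ne (hcon i) hne
          have : ∑ i, C i < ∑ i, D' i :=
            Finset.sum_lt_sum (fun i _ => hcon i) ⟨i, Finset.mem_univ i, hlt⟩
          omega
        exact hCD this
      have hv : ∃ v, C v < D' v := by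
        by_contra hcon
        push_neg at hcon
        have : C = D' := by
          funext i
          by_contra hne
          have hlt : D' i < C i := lt_of_le_of_ne (hcon i) (Ne.symm hne)
          have : ∑ i, D' i < ∑ i, C i :=
            Finset.sum_lt_sum (fun i _ => hcon i) ⟨i, Finset.mem_univ i, hlt⟩
          omega
        exact hCD this
      obtain ⟨u, hu⟩ := hu
      obtain ⟨v, hv⟩ := hv
      have huv : u ≠ v := by rintro rfl; omega
      have hgap : C v + 2 ≤ C u := by
        have := hinv u v hu hv
        omega
      set C' : Fin n → ℕ :=
        fun i => if i = u then C u - 1 else if i = v then C v + 1 else C i with hC'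
      have hC'app : ∀ i, C' i = if i = u then C u - 1 else if i = v then C v + 1 else C i :=
        fun i => rfl
      have hCu : C' u = C u - 1 := by rw [hC'app u, if_pos rfl]
      have hCv : C' v = C v + 1 := by rw [hC'app v, if_neg (Ne.symm huv), if_pos rfl]
      have hCo : ∀ i, i ≠ u → i ≠ v → C' i = C i :=
        fun i h1 h2 => by rw [hC'app i, if_neg h1, if_neg h2]
      have hg' : HypergraphGraphic C' := transfer huv hgap hg
      set μ' := ∑ i, ((C' i - D' i) + (D' i - C' i)) with hμ'
      have hlt : μ' < μ := by
        rw [hμ', ← hμ]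
        apply Finset.sum_lt_sum
        · intro i _
          rcases eq_or_ne i u with rfl | h1
          · rw [hCu]; omega
          · rcases eq_or_ne i v with rfl | h2
            · rw [hCv]; omega
            · rw [hCo i h1 h2]
        · exact ⟨u, Finset.mem_univ u, by rw [hCu]; omega⟩
      apply ih μ' hlt C' rfl hg'
      · rw [← hsum]
        have h1 : ∀ i, C' i + (if i = u then 1 else 0) = C i + (if i = v then 1 else 0) := by
          intro i
          rcases eq_or_ne i u with rfl | ha
          · rw [hCu, if_pos rfl, if_neg huv]; omega
          · rcases eq_or_ne i v with rfl | hb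
            · rw [hCv, if_neg (Ne.symm huv), if_pos rfl]
            · rw [hCo i ha hb, if_neg ha, if_neg hb]
        have hsum2 := Finset.sum_congr rfl (fun i (_ : i ∈ Finset.univ) => h1 i)
        rw [Finset.sum_add_distrib, Finset.sum_add_distrib,
          Finset.sum_ite_eq' Finset.univ u (fun _ => 1),
          Finset.sum_ite_eq' Finset.univ v (fun _ => 1)] at hsum2
        simp only [Finset.mem_univ, if_pos] at hsum2
        omega
      · intro x y hx hy
        apply hinv x y
        · rcases eq_or_ne x u with rfl | h1
          · rw [hCu] at hx; omega
          · rcases eq_or_ne x v with rfl | h2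
            · rw [hCv] at hx; omega
            · rwa [hCo x h1 h2] at hx
        · rcases eq_or_ne y u with rfl | h1
          · rw [hCu] at hy; omega
          · rcases eq_or_ne y v with rfl | h2
            · rw [hCv] at hy; omega
            · rwa [hCo y h1 h2] at hy

/-- Let `D = (dmax, …, dmax, d, dmin, …, dmin)` be a graphic 3-uniform hypergraph degree
sequence on `n` vertices (with `a` maximal entries, one entry `d` with `dmin ≤ d ≤ dmax`,
and the rest minimal). If `D'` is a degree sequence on `n` vertices with all entries between
`dmin` and `dmax` and the same degree sum as `D`, then `D'` is also graphic. -/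
theorem statement5 {n : ℕ} (a dmax dmin d : ℕ) (ha : a < n)
    (hd : dmin ≤ d ∧ d ≤ dmax)
    (D : Fin n → ℕ)
    (hD : ∀ i : Fin n,
      D i = if (i : ℕ) < a then dmax else if (i : ℕ) = a then d else dmin)
    (hgraphic : HypergraphGraphic D)
    (D' : Fin n → ℕ)
    (hb : ∀ i, dmin ≤ D' i ∧ D' i ≤ dmax)
    (hs : ∑ i, D' i = ∑ i, D i) :
    HypergraphGraphic D' := by
  set g := Tuple.sort D' with hg
  have hmono : Monotone (D' ∘ ⇑g) := Tuple.monotone_sort D'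
  set σ : Equiv.Perm (Fin n) := (g⁻¹ : Equiv.Perm (Fin n)).trans Fin.revPerm with hσ
  set C0 := D ∘ ⇑σ with hC0
  have hg0 : HypergraphGraphic C0 := graphic_comp_perm hgraphic σ
  have hsum0 : ∑ i, C0 i = ∑ i, D' i := by
    rw [hs, hC0]
    exact Equiv.sum_comp σ D
  have happ : ∀ i, C0 i = D (Fin.rev (g⁻¹ i)) := fun i => rfl
  have hinv : ∀ u v, D' u < C0 u → C0 v < D' v → D' v ≤ D' u := by
    intro u v hu hv
    set p := g⁻¹ u with hp
    set q := g⁻¹ v with hq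
    have hpa : ((Fin.rev p : Fin n) : ℕ) ≤ a := by
      by_contra hlt
      push_neg at hlt
      have hmin : D (Fin.rev p) = dmin := by
        rw [hD]; rw [if_neg (by omega), if_neg (by omega)]
      have h1 := (hb u).1
      rw [happ u, ← hp, hmin] at hu
      omega
    have hqa : a ≤ ((Fin.rev q : Fin n) : ℕ) := by
      by_contra hlt
      push_neg at hlt
      have hmax : D (Fin.rev q) = dmax := by
        rw [hD]; rw [if_pos (by omega)]
      have h2 := (hb v).2
      rw [happ v, ← hq, hmax] at hv
      omega
    have hqp : q ≤ p := by
      apply Fin.rev_le_rev.mp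
      rw [Fin.le_def]
      omega
    have := hmono hqp
    simpa [hp, hq] using this
  exact reach D' _ C0 rfl hg0 hsum0 hinv
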